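/- For every real b > 0 and every complex number x with |Im x| < (b + b⁻¹)/2, the function t ↦ (1/t) · ( sin(2xt) / (2 sinh(bt) sinh(t/b)) − x/t ) is Lebesgue integrable on the interval (0, ∞). (Here sin and sinh denote the complex sine and the real hyperbolic sine respectively.) -/

import Mathlib

open MeasureTheory

open Finset in
lemma my_sin_lin (z : ℂ) (hz : ‖z‖ ≤ 1) : ‖Complex.sin z - z‖ ≤ 2/9 * ‖z‖^3 := by
  have hz' : ‖z * Complex.I‖ ≤ 1 := by simpa using hz
  have hz'' : ‖-z * Complex.I‖ ≤ 1 := by simpa using hz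
  have h1 := Complex.exp_bound hz' (by norm_num : 0 < 3)
  have h2 := Complex.exp_bound hz'' (by norm_num : 0 < 3)
  have key : Complex.sin z - z =
      ((Complex.exp (-z * Complex.I) - ∑ m ∈ range 3, (-z * Complex.I) ^ m / m.factorial)
        - (Complex.exp (z * Complex.I) - ∑ m ∈ range 3, (z * Complex.I) ^ m / m.factorial))
        * Complex.I / 2 := by
    rw [Complex.sin]
    simp only [Finset.sum_range_succ, Finset.range_zero, Finset.sum_empty, Nat.factorial]
    push_cast
    linear_combination (-z) * Complex.I_sq
  rw [key]
  calc ‖((Complex.exp (-z * Complex.I) - ∑ m ∈ range 3, (-z * Complex.I) ^ m / m.factorial)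
        - (Complex.exp (z * Complex.I) - ∑ m ∈ range 3, (z * Complex.I) ^ m / m.factorial))
        * Complex.I / 2‖
      ≤ (‖Complex.exp (-z * Complex.I) - ∑ m ∈ range 3, (-z * Complex.I) ^ m / m.factorial‖
        + ‖Complex.exp (z * Complex.I) - ∑ m ∈ range 3, (z * Complex.I) ^ m / m.factorial‖) / 2 := by
        rw [norm_div, norm_mul, Complex.norm_I, mul_one, Complex.norm_ofNat]
        gcongr
        exact norm_sub_le _ _
    _ ≤ (‖-z * Complex.I‖ ^ 3 * ((3:ℕ).succ * (((3:ℕ).factorial : ℝ) * 3)⁻¹)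
        + ‖z * Complex.I‖ ^ 3 * ((3:ℕ).succ * (((3:ℕ).factorial : ℝ) * 3)⁻¹)) / 2 := by
        push_cast at h1 h2 ⊢
        gcongr
    _ ≤ 2/9 * ‖z‖^3 := by
        have e1 : ‖-z * Complex.I‖ = ‖z‖ := by
          simp
        have e2 : ‖z * Complex.I‖ = ‖z‖ := by
          simp
        rw [e1, e2]
        simp [Nat.factorial]
        ring_nf
        norm_num

open Finset in
lemma my_sinh_taylor {s : ℝ} (h0 : 0 ≤ s) (h1 : s ≤ 1) :
    |Real.sinh s - s| ≤ 2/9 * s^3 := by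
  have ha : |s| ≤ 1 := by rwa [abs_of_nonneg h0]
  have hb : |(-s)| ≤ 1 := by rwa [abs_neg, abs_of_nonneg h0]
  have e1 := Real.exp_bound ha (by norm_num : 0 < 3)
  have e2 := Real.exp_bound hb (by norm_num : 0 < 3)
  have s1 : ∑ m ∈ range 3, s ^ m / (m.factorial : ℝ) = 1 + s + s^2/2 := by
    simp [Finset.sum_range_succ, Nat.factorial]
  have s2 : ∑ m ∈ range 3, (-s) ^ m / (m.factorial : ℝ) = 1 - s + s^2/2 := by
    simp [Finset.sum_range_succ, Nat.factorial]; ring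
  rw [s1] at e1; rw [s2] at e2
  rw [abs_of_nonneg h0] at e1
  rw [abs_neg, abs_of_nonneg h0] at e2
  norm_num [Nat.factorial] at e1 e2
  have key : Real.sinh s - s =
      ((Real.exp s - (1 + s + s^2/2)) - (Real.exp (-s) - (1 - s + s^2/2))) / 2 := by
    rw [Real.sinh_eq]; ring
  rw [key]
  have := abs_sub (Real.exp s - (1 + s + s^2/2)) (Real.exp (-s) - (1 - s + s^2/2))
  rw [abs_div, abs_two]
  calc |Real.exp s - (1 + s + s^2/2) - (Real.exp (-s) - (1 - s + s^2/2))| / 2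
      ≤ (|Real.exp s - (1 + s + s^2/2)| + |Real.exp (-s) - (1 - s + s^2/2)|) / 2 := by
        gcongr
    _ ≤ 2/9 * s^3 := by linarith

lemma my_sinh_le {s : ℝ} (h0 : 0 ≤ s) (h1 : s ≤ 1) : Real.sinh s ≤ 2 * s := by
  have h := my_sinh_taylor h0 h1
  have hs3 : s^3 ≤ s := by nlinarith [mul_nonneg (mul_nonneg h0 h0) (sub_nonneg.2 h1), mul_nonneg h0 (sub_nonneg.2 h1)]
  have := abs_sub_le_iff.mp h
  nlinarith

lemma my_le_sinh {s : ℝ} (h0 : 0 ≤ s) : s ≤ Real.sinh s := by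
  rcases eq_or_lt_of_le h0 with h | h
  · simp [← h]
  · exact (Real.self_lt_sinh_iff.mpr h).le

lemma my_norm_sin_le (z : ℂ) : ‖Complex.sin z‖ ≤ Real.exp |z.im| := by
  rw [Complex.sin]
  calc ‖(Complex.exp (-z * Complex.I) - Complex.exp (z * Complex.I)) * Complex.I / 2‖
      = ‖Complex.exp (-z * Complex.I) - Complex.exp (z * Complex.I)‖ / 2 := by
        rw [norm_div, norm_mul, Complex.norm_I, mul_one, Complex.norm_ofNat]
    _ ≤ (‖Complex.exp (-z * Complex.I)‖ + ‖Complex.exp (z * Complex.I)‖) / 2 := by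
        gcongr; exact norm_sub_le _ _
    _ = (Real.exp z.im + Real.exp (-z.im)) / 2 := by
        rw [Complex.norm_exp, Complex.norm_exp]
        simp
    _ ≤ Real.exp |z.im| := by
        have h1 : Real.exp z.im ≤ Real.exp |z.im| := Real.exp_le_exp.mpr (le_abs_self _)
        have h2 : Real.exp (-z.im) ≤ Real.exp |z.im| := Real.exp_le_exp.mpr (neg_le_abs _)
        linarith

lemma my_sinh_ge_exp {c s : ℝ} (hc : 0 < c) (hs : c ≤ s) :
    (1 - Real.exp (-(2*c))) / 2 * Real.exp s ≤ Real.sinh s := by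
  rw [Real.sinh_eq]
  have h1 : Real.exp (-s) ≤ Real.exp (-(2*c)) * Real.exp s := by
    rw [← Real.exp_add]
    exact Real.exp_le_exp.mpr (by linarith)
  nlinarith [Real.exp_pos s]

/-- The integrand defining `log s_b`. -/
noncomputable def sbIntegrand (b : ℝ) (x : ℂ) (t : ℝ) : ℂ :=
  (1 / (t : ℂ)) *
    (Complex.sin (2 * x * t) /
        (2 * (Real.sinh (b * t) : ℂ) * (Real.sinh (t / b) : ℂ)) - x / t)

lemma my_cont (b : ℝ) (hb : 0 < b) (x : ℂ) :
    ContinuousOn (sbIntegrand b x) (Set.Ioi (0:ℝ)) := by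
  unfold sbIntegrand
  have hT : ∀ t ∈ Set.Ioi (0:ℝ), (t:ℂ) ≠ 0 := fun t ht =>
    Complex.ofReal_ne_zero.mpr (ne_of_gt ht)
  have hD : ∀ t ∈ Set.Ioi (0:ℝ),
      (2 * (Real.sinh (b * t) : ℂ) * (Real.sinh (t / b) : ℂ)) ≠ 0 := by
    intro t ht
    have ht' : (0:ℝ) < t := ht
    have h1 : 0 < Real.sinh (b * t) := Real.sinh_pos_iff.mpr (by positivity)
    have h2 : 0 < Real.sinh (t / b) := Real.sinh_pos_iff.mpr (by positivity)
    simp only [mul_ne_zero_iff]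
    refine ⟨⟨two_ne_zero, ?_⟩, ?_⟩ <;> exact_mod_cast ne_of_gt (by assumption)
  apply ContinuousOn.mul
  · exact ContinuousOn.div continuousOn_const Complex.continuous_ofReal.continuousOn hT
  · apply ContinuousOn.sub
    · apply ContinuousOn.div
      · apply Continuous.continuousOn
        apply Complex.continuous_sin.comp
        continuity
      · apply Continuous.continuousOn
        continuity
      · exact hD
    · exact ContinuousOn.div continuousOn_const Complex.continuous_ofReal.continuousOn hT

set_option maxHeartbeats 1000000 in
lemma my_small_bound (b : ℝ) (hb : 0 < b) (x : ℂ) {t : ℝ} (ht0 : 0 < t) (ht1 : t ≤ 1)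
    (htb : b * t ≤ 1) (htb' : t / b ≤ 1) (htx : 2 * ‖x‖ * t ≤ 1) :
    ‖sbIntegrand b x t‖ ≤ ‖x‖^3 + ‖x‖ * (b^2 + (b⁻¹)^2) := by
  have hβ0 : 0 < b⁻¹ := by positivity
  have hbβ : b * b⁻¹ = 1 := mul_inv_cancel₀ (ne_of_gt hb)
  set u := b * t with hu
  set v := t * b⁻¹ with hv
  have hvtb : t / b = v := by rw [hv, div_eq_mul_inv]
  have hu0 : 0 < u := by positivity
  have hv0 : 0 < v := by positivity
  have hu1 : u ≤ 1 := htb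
  have hv1 : v ≤ 1 := by rw [hv, ← div_eq_mul_inv]; exact htb'
  have huv : u * v = t^2 := by rw [hu, hv]; field_simp
  obtain ⟨A, hA⟩ : ∃ A, Real.sinh (b * t) = A := ⟨_, rfl⟩
  obtain ⟨B, hB⟩ : ∃ B, Real.sinh (t / b) = B := ⟨_, rfl⟩
  rw [hvtb] at hB
  have hA1 : u ≤ A := hA ▸ my_le_sinh hu0.le
  have hB1 : v ≤ B := by rw [← hB, hv, ← div_eq_mul_inv]; exact my_le_sinh (by positivity)
  have hA2 : A ≤ u + 2/9 * u^3 := by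
    have := (abs_le.mp (my_sinh_taylor hu0.le hu1)).2
    rw [hA] at this; linarith
  have hB2 : B ≤ v + 2/9 * v^3 := by
    have := (abs_le.mp (my_sinh_taylor hv0.le hv1)).2
    rw [hB] at this; linarith
  have hA0 : 0 < A := lt_of_lt_of_le hu0 hA1
  have hB0 : 0 < B := lt_of_lt_of_le hv0 hB1
  have hABl : t^2 ≤ A * B := by
    rw [← huv]; exact mul_le_mul hA1 hB1 hv0.le hA0.le
  have hv2 : v^2 ≤ 1 := by nlinarith
  have hv3 : v^3 ≤ v := by nlinarith
  have hu3 : u^3*v^3 ≤ u^3*v :=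
    mul_le_mul_of_nonneg_left hv3 (by positivity)
  have hABu : A * B ≤ t^2 + t^2 * (u^2 + v^2) := by
    have h1 : A * B ≤ (u + 2/9*u^3) * (v + 2/9*v^3) :=
      mul_le_mul hA2 hB2 hB0.le (by positivity)
    have h2 : u*v^3 ≤ u*v*(u^2+v^2) := by nlinarith [mul_pos hu0 hv0]
    have h3 : u^3*v ≤ u*v*(u^2+v^2) := by nlinarith [mul_pos hu0 hv0]
    have hX : 0 ≤ u*v*(u^2+v^2) := by positivity
    have hXt : u*v*(u^2+v^2) = t^2*(u^2+v^2) := by rw [huv]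
    calc A * B ≤ (u + 2/9*u^3) * (v + 2/9*v^3) := h1
      _ = u*v + 2/9*(u*v^3) + 2/9*(u^3*v) + 4/81*(u^3*v^3) := by ring
      _ ≤ u*v + u*v*(u^2+v^2) := by linarith
      _ = t^2 + t^2*(u^2+v^2) := by rw [huv]
  have hconv : t^2 * (u^2 + v^2) = t^4 * (b^2 + (b⁻¹)^2) := by
    rw [hu, hv]; ring
  rw [hconv] at hABu
  -- now the complex estimate
  have hd0 : (0:ℝ) < 2 * A * B := by positivity
  have hT : (t:ℂ) ≠ 0 := Complex.ofReal_ne_zero.mpr (ne_of_gt ht0)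
  have hdC : ((2 * A * B : ℝ):ℂ) ≠ 0 := Complex.ofReal_ne_zero.mpr (ne_of_gt hd0)
  have hAC : (A:ℂ) ≠ 0 := Complex.ofReal_ne_zero.mpr (ne_of_gt hA0)
  have hBC : (B:ℂ) ≠ 0 := Complex.ofReal_ne_zero.mpr (ne_of_gt hB0)
  have hid : sbIntegrand b x t =
      ((Complex.sin (2*x*t) - 2*x*t) - x * ((2 * A * B - 2*t^2 : ℝ):ℂ) / t) /
        ((t:ℂ) * ((2 * A * B : ℝ):ℂ)) := by
    unfold sbIntegrand
    rw [hvtb, hA, hB]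
    push_cast
    field_simp
    ring
  rw [hid]
  have hnormden : ‖(t:ℂ) * ((2 * A * B : ℝ):ℂ)‖ = t * (2 * A * B) := by
    rw [norm_mul, Complex.norm_real, Complex.norm_real, Real.norm_eq_abs, Real.norm_eq_abs,
      abs_of_pos ht0, abs_of_pos hd0]
  have h2xt : ‖(2*x*(t:ℂ))‖ = 2 * ‖x‖ * t := by
    rw [norm_mul, norm_mul, Complex.norm_real, Real.norm_eq_abs, Complex.norm_ofNat,
      abs_of_pos ht0]
  have hsin : ‖Complex.sin (2*x*t) - 2*x*t‖ ≤ 2 * ‖x‖^3 * t^3 := by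
    have := my_sin_lin (2*x*t) (by rw [h2xt]; exact htx)
    rw [h2xt] at this
    calc ‖Complex.sin (2*x*t) - 2*x*t‖ ≤ 2/9 * (2*‖x‖*t)^3 := this
      _ ≤ 2 * ‖x‖^3 * t^3 := by nlinarith [norm_nonneg x, pow_nonneg (norm_nonneg x) 3, pow_pos ht0 3]
  have hsecond : ‖x * ((2 * A * B - 2*t^2 : ℝ):ℂ) / t‖ ≤ 2 * ‖x‖ * (b^2+(b⁻¹)^2) * t^3 := by
    rw [norm_div, norm_mul, Complex.norm_real, Complex.norm_real, Real.norm_eq_abs,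
      Real.norm_eq_abs, abs_of_pos ht0]
    have habs : |2 * A * B - 2*t^2| ≤ 2 * t^4 * (b^2 + (b⁻¹)^2) := by
      rw [abs_of_nonneg (by nlinarith)]; nlinarith
    calc ‖x‖ * |2 * A * B - 2*t^2| / t ≤ ‖x‖ * (2 * t^4 * (b^2 + (b⁻¹)^2)) / t := by
          gcongr
      _ = 2 * ‖x‖ * (b^2+(b⁻¹)^2) * t^3 := by field_simp
  have hnum : ‖Complex.sin (2*x*t) - 2*x*t - x * ((2 * A * B - 2*t^2 : ℝ):ℂ) / t‖ ≤
      2 * ‖x‖^3 * t^3 + 2 * ‖x‖ * (b^2+(b⁻¹)^2) * t^3 :=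
    (norm_sub_le _ _).trans (by linarith)
  rw [norm_div, hnormden]
  calc ‖Complex.sin (2*x*t) - 2*x*t - x * ((2 * A * B - 2*t^2 : ℝ):ℂ) / t‖ / (t * (2 * A * B))
      ≤ (2 * ‖x‖^3 * t^3 + 2 * ‖x‖ * (b^2+(b⁻¹)^2) * t^3) / (t * (2*t^2)) := by
        apply div_le_div₀ (by positivity) hnum (by positivity)
        nlinarith
    _ = ‖x‖^3 + ‖x‖ * (b^2+(b⁻¹)^2) := by field_simp

set_option maxHeartbeats 1000000 in
lemma my_large_bound (b : ℝ) (hb : 0 < b) (x : ℂ) {δ t : ℝ} (hδ0 : 0 < δ) (hδt : δ < t) :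
    ‖sbIntegrand b x t‖ ≤
      (1/δ) * ((1/(2*((1 - Real.exp (-(2*(b*δ))))/2)*((1 - Real.exp (-(2*(δ/b))))/2)))
          * Real.exp (-((b+b⁻¹) - 2*|x.im|)*t)) + ‖x‖*(t^2)⁻¹ := by
  have ht0 : 0 < t := hδ0.trans hδt
  set c1 := (1 - Real.exp (-(2*(b*δ))))/2 with hc1def
  set c2 := (1 - Real.exp (-(2*(δ/b))))/2 with hc2def
  have hc10 : 0 < c1 := by
    have h := Real.exp_lt_one_iff.mpr (neg_lt_zero.mpr (show (0:ℝ) < 2*(b*δ) by positivity))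
    rw [hc1def]; linarith
  have hc20 : 0 < c2 := by
    have h := Real.exp_lt_one_iff.mpr (neg_lt_zero.mpr (show (0:ℝ) < 2*(δ/b) by positivity))
    rw [hc2def]; linarith
  have hsinh1 : 0 < Real.sinh (b*t) := Real.sinh_pos_iff.mpr (by positivity)
  have hsinh2 : 0 < Real.sinh (t/b) := Real.sinh_pos_iff.mpr (by positivity)
  set d := 2 * Real.sinh (b*t) * Real.sinh (t/b) with hddef
  have hd0 : 0 < d := by rw [hddef]; positivity
  -- step 1 : basic decomposition
  have e1 : ‖(1:ℂ)/(t:ℂ)‖ = 1/t := by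
    rw [norm_div, norm_one, Complex.norm_real, Real.norm_eq_abs, abs_of_pos ht0]
  have eD : ‖(2 * (Real.sinh (b * t) : ℂ) * (Real.sinh (t / b) : ℂ))‖ = d := by
    rw [norm_mul, norm_mul, Complex.norm_ofNat, Complex.norm_real, Complex.norm_real,
      Real.norm_eq_abs, Real.norm_eq_abs, abs_of_pos hsinh1, abs_of_pos hsinh2, hddef]
  have eT : ‖(x / (t:ℂ))‖ = ‖x‖/t := by
    rw [norm_div, Complex.norm_real, Real.norm_eq_abs, abs_of_pos ht0]
  have step1 : ‖sbIntegrand b x t‖ ≤ (1/t) * (‖Complex.sin (2*x*t)‖/d + ‖x‖/t) := by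
    unfold sbIntegrand
    rw [norm_mul, e1]
    gcongr
    refine (norm_sub_le _ _).trans ?_
    rw [norm_div, eD, eT]
  -- step 2 : sin bound
  have him : (2*x*(t:ℂ)).im = 2*x.im*t := by simp
  have hS : ‖Complex.sin (2*x*(t:ℂ))‖ ≤ Real.exp (2*|x.im| * t) := by
    refine (my_norm_sin_le _).trans ?_
    rw [him]
    apply Real.exp_le_exp.mpr
    rw [abs_mul, abs_mul]
    rw [abs_of_pos ht0, abs_of_nonneg (by norm_num : (0:ℝ) ≤ (2:ℝ))]
  -- step 3 : sinh lower bounds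
  have hd1 : c1 * Real.exp (b*t) ≤ Real.sinh (b*t) :=
    my_sinh_ge_exp (by positivity) (by nlinarith)
  have hd2 : c2 * Real.exp (t/b) ≤ Real.sinh (t/b) :=
    my_sinh_ge_exp (by positivity) (by gcongr)
  have hexp : Real.exp (b*t) * Real.exp (t/b) = Real.exp ((b+b⁻¹)*t) := by
    rw [← Real.exp_add]; congr 1; field_simp
  have hdge : 2*c1*c2*Real.exp ((b+b⁻¹)*t) ≤ d := by
    calc 2*c1*c2*Real.exp ((b+b⁻¹)*t) = 2*(c1*Real.exp (b*t))*(c2*Real.exp (t/b)) := by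
          rw [← hexp]; ring
      _ ≤ 2*Real.sinh (b*t)*Real.sinh (t/b) := by gcongr <;> positivity
      _ = d := hddef.symm
  calc ‖sbIntegrand b x t‖ ≤ (1/t) * (‖Complex.sin (2*x*t)‖/d + ‖x‖/t) := step1
    _ = (1/t) * (‖Complex.sin (2*x*t)‖/d) + ‖x‖*(t^2)⁻¹ := by
        field_simp
    _ ≤ (1/δ) * (Real.exp (2*|x.im| * t)/(2*c1*c2*Real.exp ((b+b⁻¹)*t))) + ‖x‖*(t^2)⁻¹ := by
        have h1t : 1/t ≤ 1/δ := one_div_le_one_div_of_le hδ0 hδt.le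
        have h2 : ‖Complex.sin (2*x*t)‖/d ≤ Real.exp (2*|x.im| * t)/(2*c1*c2*Real.exp ((b+b⁻¹)*t)) :=
          div_le_div₀ (Real.exp_pos _).le hS (by positivity) hdge
        exact add_le_add_left (mul_le_mul h1t h2 (by positivity) (by positivity)) _
    _ = (1/δ) * ((1/(2*c1*c2)) * Real.exp (-((b+b⁻¹) - 2*|x.im|)*t)) + ‖x‖*(t^2)⁻¹ := by
        rw [show -((b+b⁻¹)-2*|x.im|)*t = 2*|x.im| * t - (b+b⁻¹)*t by ring, Real.exp_sub]
        rw [div_mul_eq_div_div]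
        field_simp

/-- For every `b > 0` and every `x` with `|Im x| < (b + b⁻¹)/2`, the integrand
defining `log s_b` is Lebesgue integrable on `(0, ∞)`. -/
theorem sbIntegrand_integrableOn (b : ℝ) (hb : 0 < b) (x : ℂ)
    (hx : |x.im| < (b + b⁻¹) / 2) :
    IntegrableOn (sbIntegrand b x) (Set.Ioi (0 : ℝ)) := by
  have hbi : 0 < b⁻¹ := by positivity
  have hx0 : (0:ℝ) < 2 * ‖x‖ + 1 := by positivity
  set δ : ℝ := min (min 1 b) (min b⁻¹ (2 * ‖x‖ + 1)⁻¹) with hδdef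
  have hδ0 : 0 < δ := by
    apply lt_min (lt_min one_pos hb) (lt_min hbi (by positivity))
  have hδ1 : δ ≤ 1 := (min_le_left _ _).trans (min_le_left _ _)
  have hδb : δ ≤ b := (min_le_left _ _).trans (min_le_right _ _)
  have hδbi : δ ≤ b⁻¹ := (min_le_right _ _).trans (min_le_left _ _)
  have hδx : δ ≤ (2 * ‖x‖ + 1)⁻¹ := (min_le_right _ _).trans (min_le_right _ _)
  rw [← Set.Ioc_union_Ioi_eq_Ioi hδ0.le]
  apply IntegrableOn.union
  · -- small part
    have hmeas : AEStronglyMeasurable (sbIntegrand b x) (volume.restrict (Set.Ioc 0 δ)) :=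
      ((my_cont b hb x).mono Set.Ioc_subset_Ioi_self).aestronglyMeasurable measurableSet_Ioc
    refine Integrable.mono' (g := fun _ => ‖x‖^3 + ‖x‖ * (b^2 + (b⁻¹)^2)) ?_ hmeas ?_
    · exact integrableOn_const measure_Ioc_lt_top.ne
    · filter_upwards [ae_restrict_mem measurableSet_Ioc] with t ht
      obtain ⟨ht0, htδ⟩ := ht
      apply my_small_bound b hb x ht0 (htδ.trans hδ1)
      · calc b * t ≤ b * b⁻¹ := by
              apply mul_le_mul_of_nonneg_left (htδ.trans hδbi) hb.le
          _ = 1 := mul_inv_cancel₀ hb.ne'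
      · rw [div_le_one hb]; exact htδ.trans hδb
      · have h1 : t ≤ (2 * ‖x‖ + 1)⁻¹ := htδ.trans hδx
        have h3 : (2 * ‖x‖ + 1) * t ≤ 1 := by
          calc (2 * ‖x‖ + 1) * t ≤ (2 * ‖x‖ + 1) * (2 * ‖x‖ + 1)⁻¹ :=
                mul_le_mul_of_nonneg_left h1 hx0.le
            _ = 1 := mul_inv_cancel₀ hx0.ne'
        nlinarith [norm_nonneg x]
  · -- large part
    have hε0 : 0 < (b + b⁻¹) - 2 * |x.im| := by linarith
    set c1 := (1 - Real.exp (-(2*(b*δ))))/2 with hc1def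
    set c2 := (1 - Real.exp (-(2*(δ/b))))/2 with hc2def
    set K := (1/δ) * (1/(2*c1*c2)) with hKdef
    have hg : IntegrableOn
        (fun t => (1/δ) * ((1/(2*c1*c2)) * Real.exp (-((b + b⁻¹) - 2 * |x.im|) * t))
          + ‖x‖ * (t^2)⁻¹) (Set.Ioi δ) := by
      apply Integrable.add
      · exact ((exp_neg_integrableOn_Ioi δ hε0).const_mul _).const_mul _
      · have h := integrableOn_Ioi_rpow_of_lt (show (-2:ℝ) < -1 by norm_num) hδ0
        have h2 : IntegrableOn (fun t : ℝ => (t^2)⁻¹) (Set.Ioi δ) := by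
          refine h.congr_fun (fun t ht => ?_) measurableSet_Ioi
          have ht0 : 0 < t := hδ0.trans ht
          rw [show (-2:ℝ) = -((2:ℕ):ℝ) by norm_num]; beta_reduce; rw [Real.rpow_neg ht0.le, Real.rpow_natCast]
        exact h2.const_mul _
    have hmeas : AEStronglyMeasurable (sbIntegrand b x) (volume.restrict (Set.Ioi δ)) :=
      ((my_cont b hb x).mono (Set.Ioi_subset_Ioi hδ0.le)).aestronglyMeasurable measurableSet_Ioi
    refine Integrable.mono' hg hmeas ?_
    filter_upwards [ae_restrict_mem measurableSet_Ioi] with t ht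
    exact my_large_bound b hb x hδ0 ht
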